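/- For every point P ∈ S, the number of points Q ∈ S such that the line through P and Q is a halving line of S is odd. Equivalently, every vertex of the underlying graph of S has odd degree. -/

import Mathlib

/-- Planar cross product (signed area determinant) of two vectors in `ℝ × ℝ`. -/
def det2 (u v : ℝ × ℝ) : ℝ := u.1 * v.2 - u.2 * v.1

/-- Dot product of two vectors in `ℝ × ℝ`. -/
def dot2 (u v : ℝ × ℝ) : ℝ := u.1 * v.1 + u.2 * v.2

/-- A finite set of points of the plane is in general position if no three
distinct points of it are collinear. -/
def GenPos (S : Finset (ℝ × ℝ)) : Prop :=
  ∀ P ∈ S, ∀ Q ∈ S, ∀ R ∈ S, P ≠ Q → P ≠ R → Q ≠ R →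
    ¬ Collinear ℝ ({P, Q, R} : Set (ℝ × ℝ))

/-- The line through the two distinct points `P, Q ∈ S` is a halving line of `S`:
each of the two open half-planes it determines contains exactly
`(S.card - 2) / 2` points of `S`. -/
def IsHalving (S : Finset (ℝ × ℝ)) (P Q : ℝ × ℝ) : Prop :=
  P ∈ S ∧ Q ∈ S ∧ P ≠ Q ∧
  {X ∈ (S : Set (ℝ × ℝ)) | 0 < det2 (Q - P) (X - P)}.ncard = (S.card - 2) / 2 ∧
  {X ∈ (S : Set (ℝ × ℝ)) | det2 (Q - P) (X - P) < 0}.ncard = (S.card - 2) / 2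

/-- Degree of a point in the underlying graph of `S`: the number of points `Q`
such that the line `PQ` is a halving line of `S`. -/
noncomputable def hdeg (S : Finset (ℝ × ℝ)) (P : ℝ × ℝ) : ℕ :=
  {Q : ℝ × ℝ | IsHalving S P Q}.ncard

/-- The number of halving lines of `S`, counted as unordered pairs of points. -/
noncomputable def numHalvingLines (S : Finset (ℝ × ℝ)) : ℕ :=
  {e : Finset (ℝ × ℝ) | ∃ P Q : ℝ × ℝ, e = {P, Q} ∧ IsHalving S P Q}.ncard

/-- The underlying graph of `S`: vertices are the points of `S`, and two points
are adjacent exactly when the line through them is a halving line of `S`. -/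
def underlyingGraph (S : Finset (ℝ × ℝ)) : SimpleGraph {x : ℝ × ℝ // x ∈ S} where
  Adj P Q := IsHalving S P.1 Q.1 ∧ IsHalving S Q.1 P.1
  symm := ⟨fun _ _ h => ⟨h.2, h.1⟩⟩
  loopless := ⟨fun _ h => h.1.2.2.1 rfl⟩

lemma exists_smul_of_det2 (u v : ℝ × ℝ) (hu : u ≠ 0) (h : det2 u v = 0) :
    ∃ c : ℝ, v = c • u := by
  unfold det2 at h
  by_cases h1 : u.1 = 0
  · have h2 : u.2 ≠ 0 := by
      intro h2; apply hu; ext <;> simp [h1, h2]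
    refine ⟨v.2 / u.2, ?_⟩
    have : v.1 = 0 := by
      rw [h1] at h
      simp only [zero_mul, zero_sub, neg_eq_zero, mul_eq_zero] at h
      tauto
    ext <;> simp [Prod.smul_def, this, h1]
    field_simp
  · refine ⟨v.1 / u.1, ?_⟩
    ext <;> simp [Prod.smul_def]
    · field_simp
    · field_simp
      linarith
lemma collinear_of_det2 (P Q R : ℝ × ℝ) (hQ : Q ≠ P)
    (h : det2 (Q - P) (R - P) = 0) : Collinear ℝ ({P, Q, R} : Set (ℝ × ℝ)) := by
  have hv : Q - P ≠ 0 := sub_ne_zero.mpr hQ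
  obtain ⟨c, hc⟩ := exists_smul_of_det2 _ _ hv h
  rw [collinear_iff_of_mem (Set.mem_insert P {Q, R})]
  refine ⟨Q - P, ?_⟩
  rintro p (rfl | rfl | hp)
  · exact ⟨0, by simp⟩
  · exact ⟨1, by simp⟩
  · simp only [Set.mem_singleton_iff] at hp
    subst hp
    refine ⟨c, ?_⟩
    have : p = c • (Q - P) + P := by rw [← hc]; abel
    simpa using this

lemma count_split (V : Finset (ℝ × ℝ)) (q : ℝ × ℝ) (hq : q ∈ V) (g : (ℝ × ℝ) → ℝ)
    (hg : ∀ X ∈ V, (g X = 0 ↔ X = q)) :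
    (V.filter fun X => 0 < g X).card + (V.filter fun X => g X < 0).card + 1 = V.card := by
  classical
  have hdisj : Disjoint (V.filter fun X => 0 < g X) (V.filter fun X => g X < 0) := by
    refine Finset.disjoint_filter.mpr ?_
    intro x _ hx
    linarith
  have hunion : (V.filter fun X => 0 < g X) ∪ (V.filter fun X => g X < 0)
      = V.erase q := by
    rw [← Finset.filter_or]
    ext x
    simp only [Finset.mem_filter, Finset.mem_erase]
    constructor
    · rintro ⟨hxV, hx⟩
      refine ⟨?_, hxV⟩
      intro rfl
      have : g x = 0 := (hg x hxV).mpr rfl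
      rcases hx with h | h <;> linarith
    · rintro ⟨hne, hxV⟩
      refine ⟨hxV, ?_⟩
      have : g x ≠ 0 := fun h0 => hne ((hg x hxV).mp h0)
      rcases lt_trichotomy (g x) 0 with h | h | h
      · exact Or.inr h
      · exact absurd h this
      · exact Or.inl h
  have := Finset.card_union_of_disjoint hdisj
  rw [hunion, Finset.card_erase_of_mem hq] at this
  have hpos : 1 ≤ V.card := Finset.card_pos.mpr ⟨q, hq⟩
  omega

lemma walk_parity (F : Finset ℝ) (a b : ℝ → Bool) :
    (∀ s ∈ F, ∀ t ∈ F, s < t → (∀ z ∈ F, ¬(s < z ∧ z < t)) → a s = b t) →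
    ∀ x ∈ F, ∀ y ∈ F, (∀ z ∈ F, z ≤ x) → (∀ z ∈ F, y ≤ z) →
    (F.filter fun t => a t ≠ b t).card % 2 = (if a x = b y then 0 else 1) := by
  classical
  induction F using Finset.strongInduction with
  | _ F ih =>
    intro hcons x hx y hy hxmax hymin
    by_cases hsing : F = {x}
    · subst hsing
      have hyx : y = x := by simpa using hy
      subst hyx
      by_cases h : a y = b y <;> simp [Finset.filter_singleton, h]
    · set F' := F.erase x with hF'
      have hxF' : x ∉ F' := Finset.notMem_erase x F
      have hcard2 : 1 < F.card := by
        rcases Finset.eq_singleton_or_nontrivial hx with h | h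
        · exact absurd h hsing
        · exact Finset.one_lt_card.mpr h
      have hF'ne : F'.Nonempty := by
        obtain ⟨z, hz, hzx⟩ := Finset.exists_mem_ne hcard2 x
        exact ⟨z, Finset.mem_erase.mpr ⟨hzx, hz⟩⟩
      obtain ⟨x', hx'F', hx'max0⟩ := F'.exists_max_image id hF'ne
      have hx'max : ∀ z ∈ F', z ≤ x' := fun z hz => hx'max0 z hz
      have hx'F : x' ∈ F := Finset.mem_of_mem_erase hx'F'
      have hx'lt : x' < x := lt_of_le_of_ne (hxmax x' hx'F) (Finset.mem_erase.mp hx'F').1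
      have hyF' : y ∈ F' := by
        refine Finset.mem_erase.mpr ⟨?_, hy⟩
        intro hyx
        apply hsing
        apply Finset.eq_singleton_iff_unique_mem.mpr
        refine ⟨hx, fun z hz => le_antisymm (hxmax z hz) ?_⟩
        rw [← hyx]; exact hymin z hz
      have hcons' : a x' = b x := by
        refine hcons x' hx'F x hx hx'lt ?_
        rintro z hz ⟨h1, h2⟩
        have hzF' : z ∈ F' := Finset.mem_erase.mpr ⟨ne_of_lt h2, hz⟩
        exact absurd (hx'max z hzF') (not_le.mpr h1)
      have hsub : ∀ s ∈ F', s ∈ F := fun s hs => Finset.mem_of_mem_erase hs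
      have hconsF' : ∀ s ∈ F', ∀ t ∈ F', s < t → (∀ z ∈ F', ¬(s < z ∧ z < t)) → a s = b t := by
        intro s hs t ht hst hbet
        refine hcons s (hsub s hs) t (hsub t ht) hst ?_
        rintro z hz ⟨h1, h2⟩
        by_cases hzx : z = x
        · subst hzx
          exact absurd (lt_of_lt_of_le h2 (le_of_lt (lt_of_le_of_lt (hx'max t ht) hx'lt)))
            (lt_irrefl z)
        · exact hbet z (Finset.mem_erase.mpr ⟨hzx, hz⟩) ⟨h1, h2⟩
      have IH := ih F' (Finset.erase_ssubset hx) hconsF' x' hx'F' y hyF' hx'max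
        (fun z hz => hymin z (hsub z hz))
      have hcount : (F.filter fun t => a t ≠ b t).card
          = (F'.filter fun t => a t ≠ b t).card + (if a x = b x then 0 else 1) := by
        have hins : F = insert x F' := by
          rw [hF', Finset.insert_erase hx]
        rw [hins, Finset.filter_insert]
        by_cases h : a x = b x
        · simp [h]
        · rw [if_pos (by simpa using h), Finset.card_insert_of_notMem
            (by simp [Finset.mem_filter, hxF'])]
          simp [h]
      rw [hcount, ← hcons']
      rcases Bool.eq_false_or_eq_true (a x') with h1 | h1 <;>
      rcases Bool.eq_false_or_eq_true (a x) with h2 | h2 <;>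
      rcases Bool.eq_false_or_eq_true (b y) with h3 | h3 <;>
        simp only [h1, h2, h3] at IH ⊢ <;> norm_num at IH ⊢ <;> omega

set_option maxHeartbeats 1600000 in
lemma core (m : ℕ) (V : Finset (ℝ × ℝ)) (hV : V.card = 2 * m + 1)
    (h0 : (0 : ℝ × ℝ) ∉ V)
    (hnd : ∀ x ∈ V, ∀ y ∈ V, x ≠ y → det2 x y ≠ 0) :
    Odd ((V.filter fun q => (V.filter fun X => 0 < det2 q X).card = m).card) := by
  classical
  -- choose a generic direction d = (1, τ)
  obtain ⟨τ, hτ⟩ := Infinite.exists_notMem_finset (V.image fun X => X.2 / X.1)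
  set d : ℝ × ℝ := (1, τ) with hdd_def
  have hd : ∀ X ∈ V, det2 d X ≠ 0 := by
    intro X hX h
    have hx : det2 d X = X.2 - τ * X.1 := by simp [det2, hdd_def]
    by_cases h1 : X.1 = 0
    · have h2 : X.2 = 0 := by rw [hx, h1] at h; linarith
      exact h0 (by rwa [show X = 0 from Prod.ext h1 h2] at hX)
    · apply hτ
      refine Finset.mem_image.mpr ⟨X, hX, ?_⟩
      rw [hx] at h
      field_simp
      linarith
  have hposdd : 0 < dot2 d d := by
    simp [dot2, hdd_def]
    nlinarith [sq_nonneg τ]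
  set k : ℝ × ℝ → ℝ := fun X => dot2 d X / det2 d X with hk_def
  have hsign : ∀ X ∈ V, ∀ Y ∈ V,
      dot2 d d * det2 X Y = (k X - k Y) * (det2 d X * det2 d Y) := by
    intro X hX Y hY
    have hX' := hd X hX
    have hY' := hd Y hY
    rw [hk_def]
    field_simp
    simp [det2, dot2]
    ring
  have kinj : ∀ X ∈ V, ∀ Y ∈ V, k X = k Y → X = Y := by
    intro X hX Y hY hkk
    by_contra hne
    have h1 := hnd X hX Y hY hne
    have h2 := hsign X hX Y hY
    rw [hkk, sub_self, zero_mul] at h2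
    exact h1 (by
      have := mul_eq_zero.mp h2
      rcases this with h | h
      · exact absurd h (ne_of_gt hposdd)
      · exact h)
  set F : Finset ℝ := V.image k with hF_def
  -- sign transfer: positivity of det2 X Y via keys
  have hsign' : ∀ X ∈ V, ∀ Y ∈ V,
      (0 < det2 X Y ↔ 0 < (k X - k Y) * (det2 d X * det2 d Y)) := by
    intro X hX Y hY
    rw [← hsign X hX Y hY]
    constructor
    · intro h; exact mul_pos hposdd h
    · intro h; nlinarith
  -- the bits
  set a : ℝ → Bool := fun t => decide
    ((V.filter fun X => 0 < det2 d X * (t - k X)).card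
      + (V.filter fun X => k X = t ∧ 0 < det2 d X).card ≤ m) with ha_def
  set b : ℝ → Bool := fun t => decide
    ((V.filter fun X => 0 < det2 d X * (t - k X)).card
      + (V.filter fun X => k X = t ∧ det2 d X < 0).card ≤ m) with hb_def
  -- C0
  have hC0 : ∀ q ∈ V, ((V.filter fun X => 0 < det2 q X).card = m ↔
      (V.filter fun X => 0 < det2 d X * (k q - k X)).card = m) := by
    intro q hq
    have hz1 : ∀ X ∈ V, (det2 q X = 0 ↔ X = q) := by
      intro X hX
      constructor
      · intro h
        by_contra hne
        exact hnd q hq X hX (fun he => hne he.symm) h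
      · rintro rfl
        simp [det2, mul_comm]
    have hz2 : ∀ X ∈ V, (det2 d X * (k q - k X) = 0 ↔ X = q) := by
      intro X hX
      constructor
      · intro h
        rcases mul_eq_zero.mp h with h | h
        · exact absurd h (hd X hX)
        · exact kinj X hX q hq (by linarith [sub_eq_zero.mp h])
      · rintro rfl
        simp
    have s1 := count_split V q hq (fun X => det2 q X) hz1
    have s2 := count_split V q hq (fun X => det2 d X * (k q - k X)) hz2
    rcases (hd q hq).lt_or_gt with hqd | hqd
    · have hfe : V.filter (fun X => 0 < det2 q X)
          = V.filter (fun X => det2 d X * (k q - k X) < 0) := by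
        apply Finset.filter_congr
        intro X hX
        rw [hsign' q hq X hX]
        constructor <;> intro h <;> nlinarith
      rw [hfe]
      omega
    · have hfe : V.filter (fun X => 0 < det2 q X)
          = V.filter (fun X => 0 < det2 d X * (k q - k X)) := by
        apply Finset.filter_congr
        intro X hX
        rw [hsign' q hq X hX]
        constructor <;> intro h <;> nlinarith
      rw [hfe]
  -- C1
  have hC1 : ∀ t ∈ F, ((a t ≠ b t) ↔
      (V.filter fun X => 0 < det2 d X * (t - k X)).card = m) := by
    intro t ht
    obtain ⟨q, hqV, hkq⟩ := Finset.mem_image.mp ht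
    have hone : V.filter (fun X => k X = t) = {q} := by
      ext X
      simp only [Finset.mem_filter, Finset.mem_singleton]
      constructor
      · rintro ⟨hXV, hXk⟩
        exact kinj X hXV q hqV (by rw [hXk, hkq])
      · rintro rfl
        exact ⟨hqV, hkq⟩
    have hσp : (V.filter fun X => k X = t ∧ 0 < det2 d X).card
        = if 0 < det2 d q then 1 else 0 := by
      rw [← Finset.filter_filter, hone, Finset.filter_singleton]
      split <;> simp
    have hσm : (V.filter fun X => k X = t ∧ det2 d X < 0).card
        = if det2 d q < 0 then 1 else 0 := by
      rw [← Finset.filter_filter, hone, Finset.filter_singleton]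
      split <;> simp
    have habt : (a t ≠ b t) ↔
        ¬(((V.filter fun X => 0 < det2 d X * (t - k X)).card
            + (V.filter fun X => k X = t ∧ 0 < det2 d X).card ≤ m) ↔
          ((V.filter fun X => 0 < det2 d X * (t - k X)).card
            + (V.filter fun X => k X = t ∧ det2 d X < 0).card ≤ m)) := by
      rw [ha_def, hb_def]
      simp only [ne_eq, decide_eq_decide]
    rw [habt, hσp, hσm]
    rcases (hd q hqV).lt_or_gt with h | h
    · rw [if_neg (by linarith), if_pos h]
      omega
    · rw [if_pos h, if_neg (by linarith)]
      omega
  -- C3 consecutive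
  have hC3 : ∀ s ∈ F, ∀ t ∈ F, s < t → (∀ z ∈ F, ¬(s < z ∧ z < t)) → a s = b t := by
    intro s hsF t htF hst hbet
    set μ : ℝ := (s + t) / 2 with hμ
    have hμ1 : s < μ := by rw [hμ]; linarith
    have hμ2 : μ < t := by rw [hμ]; linarith
    have hks : ∀ X ∈ V, k X ≤ s ∨ t ≤ k X := by
      intro X hX
      by_contra hcon
      push_neg at hcon
      exact hbet (k X) (Finset.mem_image_of_mem k hX) ⟨hcon.1, hcon.2⟩
    have hA : (V.filter fun X => 0 < det2 d X * (s - k X)).card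
        + (V.filter fun X => k X = s ∧ 0 < det2 d X).card
        = (V.filter fun X => 0 < det2 d X * (μ - k X)).card := by
      have hdisj : Disjoint (V.filter fun X => 0 < det2 d X * (s - k X))
          (V.filter fun X => k X = s ∧ 0 < det2 d X) := by
        rw [Finset.disjoint_left]
        intro X h1 h2
        obtain ⟨_, hx1⟩ := Finset.mem_filter.mp h1
        obtain ⟨_, hx2⟩ := Finset.mem_filter.mp h2
        rw [hx2.1] at hx1
        simp at hx1
      rw [← Finset.card_union_of_disjoint hdisj, ← Finset.filter_or]
      apply congrArg
      apply Finset.filter_congr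
      intro X hX
      have hkX := hks X hX
      have hdX := hd X hX
      constructor
      · rintro (h | ⟨hks', hdx⟩)
        · rcases hdX.lt_or_gt with hneg | hpos
          · have h1 : s - k X < 0 := by nlinarith
            have h2 : t ≤ k X := by
              rcases hkX with h' | h'
              · linarith
              · exact h'
            nlinarith
          · have h1 : 0 < s - k X := by nlinarith
            nlinarith
        · rw [hks']
          exact mul_pos hdx (by linarith)
      · intro h
        rcases hdX.lt_or_gt with hneg | hpos
        · left
          have h1 : μ - k X < 0 := by nlinarith
          have h2 : t ≤ k X := by
            rcases hkX with h' | h'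
            · linarith
            · exact h'
          nlinarith
        · have h1 : 0 < μ - k X := by nlinarith
          rcases hkX with h' | h'
          · rcases eq_or_lt_of_le h' with he | hlt
            · right
              exact ⟨he, hpos⟩
            · left
              nlinarith
          · linarith
    have hB : (V.filter fun X => 0 < det2 d X * (t - k X)).card
        + (V.filter fun X => k X = t ∧ det2 d X < 0).card
        = (V.filter fun X => 0 < det2 d X * (μ - k X)).card := by
      have hdisj : Disjoint (V.filter fun X => 0 < det2 d X * (t - k X))
          (V.filter fun X => k X = t ∧ det2 d X < 0) := by
        rw [Finset.disjoint_left]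
        intro X h1 h2
        obtain ⟨_, hx1⟩ := Finset.mem_filter.mp h1
        obtain ⟨_, hx2⟩ := Finset.mem_filter.mp h2
        rw [hx2.1] at hx1
        simp at hx1
      rw [← Finset.card_union_of_disjoint hdisj, ← Finset.filter_or]
      apply congrArg
      apply Finset.filter_congr
      intro X hX
      have hkX := hks X hX
      have hdX := hd X hX
      constructor
      · rintro (h | ⟨hkt', hdx⟩)
        · rcases hdX.lt_or_gt with hneg | hpos
          · have h1 : t - k X < 0 := by nlinarith
            nlinarith
          · have h1 : 0 < t - k X := by nlinarith
            have h2 : k X ≤ s := by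
              rcases hkX with h' | h'
              · exact h'
              · linarith
            nlinarith
        · rw [hkt']
          exact mul_pos_of_neg_of_neg hdx (by linarith)
      · intro h
        rcases hdX.lt_or_gt with hneg | hpos
        · have h1 : μ - k X < 0 := by nlinarith
          rcases hkX with h' | h'
          · linarith
          · rcases eq_or_lt_of_le h' with he | hlt
            · right
              exact ⟨he.symm, hneg⟩
            · left
              nlinarith
        · left
          have h1 : 0 < μ - k X := by nlinarith
          have h2 : k X ≤ s := by
            rcases hkX with h' | h'
            · exact h'
            · linarith
          nlinarith
    rw [ha_def, hb_def]
    simp only [decide_eq_decide]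
    rw [hA, hB]
  
  -- C4 endpoints
  have hFne : F.Nonempty := by
    have : V.Nonempty := Finset.card_pos.mp (by omega)
    exact this.image k
  have hC4 : a (F.max' hFne) ≠ b (F.min' hFne) := by
    set x : ℝ := F.max' hFne with hx_def
    set y : ℝ := F.min' hFne with hy_def
    have hxmax : ∀ X ∈ V, k X ≤ x := fun X hX => F.le_max' _ (Finset.mem_image_of_mem k hX)
    have hymin : ∀ X ∈ V, y ≤ k X := fun X hX => F.min'_le _ (Finset.mem_image_of_mem k hX)
    have hAx : (V.filter fun X => 0 < det2 d X * (x - k X)).card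
        + (V.filter fun X => k X = x ∧ 0 < det2 d X).card
        = (V.filter fun X => 0 < det2 d X).card := by
      have hdisj : Disjoint (V.filter fun X => 0 < det2 d X * (x - k X))
          (V.filter fun X => k X = x ∧ 0 < det2 d X) := by
        rw [Finset.disjoint_left]
        intro X h1 h2
        obtain ⟨_, hx1⟩ := Finset.mem_filter.mp h1
        obtain ⟨_, hx2⟩ := Finset.mem_filter.mp h2
        rw [hx2.1] at hx1
        simp at hx1
      rw [← Finset.card_union_of_disjoint hdisj, ← Finset.filter_or]
      apply congrArg
      apply Finset.filter_congr
      intro X hX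
      have hkX := hxmax X hX
      have hdX := hd X hX
      constructor
      · rintro (h | ⟨_, hdx⟩)
        · rcases hdX.lt_or_gt with hneg | hpos
          · nlinarith
          · exact hpos
        · exact hdx
      · intro h
        rcases eq_or_lt_of_le hkX with he | hlt
        · right
          exact ⟨he, h⟩
        · left
          nlinarith
    have hBy : (V.filter fun X => 0 < det2 d X * (y - k X)).card
        + (V.filter fun X => k X = y ∧ det2 d X < 0).card
        = (V.filter fun X => det2 d X < 0).card := by
      have hdisj : Disjoint (V.filter fun X => 0 < det2 d X * (y - k X))
          (V.filter fun X => k X = y ∧ det2 d X < 0) := by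
        rw [Finset.disjoint_left]
        intro X h1 h2
        obtain ⟨_, hx1⟩ := Finset.mem_filter.mp h1
        obtain ⟨_, hx2⟩ := Finset.mem_filter.mp h2
        rw [hx2.1] at hx1
        simp at hx1
      rw [← Finset.card_union_of_disjoint hdisj, ← Finset.filter_or]
      apply congrArg
      apply Finset.filter_congr
      intro X hX
      have hkX := hymin X hX
      have hdX := hd X hX
      constructor
      · rintro (h | ⟨_, hdx⟩)
        · rcases hdX.lt_or_gt with hneg | hpos
          · exact hneg
          · nlinarith
        · exact hdx
      · intro h
        rcases eq_or_lt_of_le hkX with he | hlt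
        · right
          exact ⟨he.symm, h⟩
        · left
          nlinarith
    have hsum : (V.filter fun X => 0 < det2 d X).card
        + (V.filter fun X => det2 d X < 0).card = 2 * m + 1 := by
      have hdisj : Disjoint (V.filter fun X => 0 < det2 d X)
          (V.filter fun X => det2 d X < 0) := by
        rw [Finset.disjoint_left]
        intro X h1 h2
        obtain ⟨_, hx1⟩ := Finset.mem_filter.mp h1
        obtain ⟨_, hx2⟩ := Finset.mem_filter.mp h2
        linarith
      rw [← Finset.card_union_of_disjoint hdisj, ← Finset.filter_or]
      rw [Finset.filter_true_of_mem, hV]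
      intro X hX
      rcases (hd X hX).lt_or_gt with h | h
      · exact Or.inr h
      · exact Or.inl h
    rw [ha_def, hb_def]
    simp only [ne_eq, decide_eq_decide]
    rw [hAx, hBy]
    omega
  -- assembly
  have himg : (V.filter fun q => (V.filter fun X => 0 < det2 q X).card = m).image k
      = F.filter fun t => (V.filter fun X => 0 < det2 d X * (t - k X)).card = m := by
    ext t
    simp only [Finset.mem_image, Finset.mem_filter]
    constructor
    · rintro ⟨q, hq, rfl⟩
      exact ⟨Finset.mem_image_of_mem k hq.1, (hC0 q hq.1).mp hq.2⟩
    · rintro ⟨htF, hcnt⟩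
      obtain ⟨q, hqV, rfl⟩ := Finset.mem_image.mp htF
      exact ⟨q, ⟨hqV, (hC0 q hqV).mpr hcnt⟩, rfl⟩
  have hcard1 : (V.filter fun q => (V.filter fun X => 0 < det2 q X).card = m).card
      = (F.filter fun t => (V.filter fun X => 0 < det2 d X * (t - k X)).card = m).card := by
    rw [← himg]
    exact (Finset.card_image_of_injOn (fun X hX Y hY =>
      kinj X (Finset.mem_of_mem_filter X hX) Y (Finset.mem_of_mem_filter Y hY))).symm
  have hfilt2 : (F.filter fun t => (V.filter fun X => 0 < det2 d X * (t - k X)).card = m)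
      = F.filter fun t => a t ≠ b t := by
    apply Finset.filter_congr
    intro t ht
    exact (hC1 t ht).symm
  have hwp := walk_parity F a b hC3 (F.max' hFne) (F.max'_mem hFne)
    (F.min' hFne) (F.min'_mem hFne) (fun z hz => F.le_max' z hz) (fun z hz => F.min'_le z hz)
  rw [if_neg hC4] at hwp
  rw [Nat.odd_iff, hcard1, hfilt2]
  exact hwp

/-- every vertex of the underlying graph of `S` has odd degree. -/
theorem stmt_3 (S : Finset (ℝ × ℝ)) (heven : Even S.card) (h4 : 4 ≤ S.card)
    (hgp : GenPos S) :
    ∀ P ∈ S, Odd (hdeg S P) := by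
  classical
  intro P hP
  set m : ℕ := (S.card - 2) / 2 with hm
  have hcard : S.card = 2 * m + 2 := by
    rw [Nat.even_iff] at heven
    omega
  set V : Finset (ℝ × ℝ) := (S.erase P).image (fun Q => Q - P) with hV_def
  have hinj : Set.InjOn (fun Q : ℝ × ℝ => Q - P) (S.erase P) := by
    intro x _ y _ h
    simpa [sub_left_inj] using h
  have hVcard : V.card = 2 * m + 1 := by
    rw [hV_def, Finset.card_image_of_injOn hinj, Finset.card_erase_of_mem hP, hcard]
    omega
  have h0V : (0 : ℝ × ℝ) ∉ V := by
    intro h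
    obtain ⟨Q, hQ, hQ0⟩ := Finset.mem_image.mp h
    have : Q = P := by
      have := sub_eq_zero.mp hQ0
      exact this
    exact (Finset.mem_erase.mp hQ).1 this
  have hmemV : ∀ Q ∈ S.erase P, Q - P ∈ V := fun Q hQ => by
    rw [hV_def]; exact Finset.mem_image_of_mem _ hQ
  have hndV : ∀ x ∈ V, ∀ y ∈ V, x ≠ y → det2 x y ≠ 0 := by
    intro x hx y hy hne hdet
    obtain ⟨Q, hQ, rfl⟩ := Finset.mem_image.mp hx
    obtain ⟨R, hR, rfl⟩ := Finset.mem_image.mp hy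
    obtain ⟨hQP, hQS⟩ := Finset.mem_erase.mp hQ
    obtain ⟨hRP, hRS⟩ := Finset.mem_erase.mp hR
    have hQR : Q ≠ R := fun h => hne (by rw [h])
    exact hgp P hP Q hQS R hRS (fun h => hQP h.symm) (fun h => hRP h.symm) hQR
      (collinear_of_det2 P Q R hQP hdet)
  -- transfer of counts from S to V
  have htrans : ∀ q : ℝ × ℝ,
      (S.filter fun X => 0 < det2 q (X - P)).card
        = (V.filter fun X => 0 < det2 q X).card ∧
      (S.filter fun X => det2 q (X - P) < 0).card
        = (V.filter fun X => det2 q X < 0).card := by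
    intro q
    have hz : det2 q (P - P) = 0 := by simp [det2]
    constructor
    · have h1 : S.filter (fun X => 0 < det2 q (X - P))
          = (S.erase P).filter (fun X => 0 < det2 q (X - P)) := by
        ext X
        simp only [Finset.mem_filter, Finset.mem_erase]
        constructor
        · rintro ⟨hXS, hXp⟩
          refine ⟨⟨?_, hXS⟩, hXp⟩
          rintro rfl
          rw [hz] at hXp
          exact lt_irrefl 0 hXp
        · rintro ⟨⟨_, hXS⟩, hXp⟩
          exact ⟨hXS, hXp⟩
      rw [h1, hV_def, Finset.filter_image]
      exact (Finset.card_image_of_injOn (Set.InjOn.mono (Finset.filter_subset _ _) hinj)).symm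
    · have h1 : S.filter (fun X => det2 q (X - P) < 0)
          = (S.erase P).filter (fun X => det2 q (X - P) < 0) := by
        ext X
        simp only [Finset.mem_filter, Finset.mem_erase]
        constructor
        · rintro ⟨hXS, hXp⟩
          refine ⟨⟨?_, hXS⟩, hXp⟩
          rintro rfl
          rw [hz] at hXp
          exact lt_irrefl 0 hXp
        · rintro ⟨⟨_, hXS⟩, hXp⟩
          exact ⟨hXS, hXp⟩
      rw [h1, hV_def, Finset.filter_image]
      exact (Finset.card_image_of_injOn (Set.InjOn.mono (Finset.filter_subset _ _) hinj)).symm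
  -- characterization of IsHalving
  have hchar : ∀ Q ∈ S.erase P, (IsHalving S P Q ↔
      (V.filter fun X => 0 < det2 (Q - P) X).card = m) := by
    intro Q hQ
    obtain ⟨hQP, hQS⟩ := Finset.mem_erase.mp hQ
    have hqV : Q - P ∈ V := hmemV Q hQ
    have hsplit := count_split V (Q - P) hqV (fun X => det2 (Q - P) X) (by
      intro X hX
      constructor
      · intro h
        by_contra hne
        exact hndV (Q - P) hqV X hX (fun he => hne he.symm) h
      · rintro rfl
        simp [det2, mul_comm])
    have hc1 : {X ∈ (S : Set (ℝ × ℝ)) | 0 < det2 (Q - P) (X - P)}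
        = ↑(S.filter fun X => 0 < det2 (Q - P) (X - P)) := by
      ext X
      simp
    have hc2 : {X ∈ (S : Set (ℝ × ℝ)) | det2 (Q - P) (X - P) < 0}
        = ↑(S.filter fun X => det2 (Q - P) (X - P) < 0) := by
      ext X
      simp
    have hset1 : {X ∈ (S : Set (ℝ × ℝ)) | 0 < det2 (Q - P) (X - P)}.ncard
        = (V.filter fun X => 0 < det2 (Q - P) X).card := by
      rw [hc1, Set.ncard_coe_finset, (htrans (Q - P)).1]
    have hset2 : {X ∈ (S : Set (ℝ × ℝ)) | det2 (Q - P) (X - P) < 0}.ncard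
        = (V.filter fun X => det2 (Q - P) X < 0).card := by
      rw [hc2, Set.ncard_coe_finset, (htrans (Q - P)).2]
    unfold IsHalving
    rw [hset1, hset2, ← hm]
    constructor
    · rintro ⟨-, -, -, h1, -⟩
      exact h1
    · intro h1
      refine ⟨hP, hQS, fun h => hQP h.symm, h1, ?_⟩
      omega
  -- hdeg as a Finset card over V
  have hdeg_eq : hdeg S P
      = (V.filter fun q => (V.filter fun X => 0 < det2 q X).card = m).card := by
    have hsetdeg : {Q : ℝ × ℝ | IsHalving S P Q}
        = ↑((S.erase P).filter fun Q => IsHalving S P Q) := by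
      ext Q
      simp only [Set.mem_setOf_eq, Finset.coe_filter, Finset.mem_erase, Set.mem_setOf_eq]
      constructor
      · intro h
        exact ⟨⟨fun he => h.2.2.1 he.symm, h.2.1⟩, h⟩
      · rintro ⟨-, h⟩
        exact h
    rw [hdeg, hsetdeg, Set.ncard_coe_finset]
    have himgf : V.filter (fun q => (V.filter fun X => 0 < det2 q X).card = m)
        = ((S.erase P).filter fun Q => IsHalving S P Q).image (fun Q => Q - P) := by
      rw [hV_def, Finset.filter_image]
      congr 1
      apply Finset.filter_congr
      intro Q hQ
      exact ((hchar Q hQ).symm : _)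
    rw [himgf, Finset.card_image_of_injOn (Set.InjOn.mono (Finset.filter_subset _ _) hinj)]
  rw [hdeg_eq]
  exact core m V hVcard h0V hndV
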